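/- arXiv:1804.00059 — 2 statements merged into one kernel-verified Lean document; each statement's English description precedes it below -/
import Mathlib

section
/- If f(z) = ωz + a₂z² + ⋯ is an element of G of finite compositional order, then the order of f in G equals the multiplicative order of ω in F \ {0}. -/
open PowerSeries

/-- Composition (substitution) of formal power series: coefficient formula,
valid for `g` with zero constant term. -/
noncomputable def PS.comp {F : Type*} [CommRing F] (f g : PowerSeries F) : PowerSeries F :=
  PowerSeries.mk fun k =>
    ∑ n ∈ Finset.range (k + 1), (PowerSeries.coeff (R := F) n f) * (PowerSeries.coeff (R := F) k (g ^ n))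

/-- The group `G` of series with zero constant term and nonzero linear coefficient. -/
def PS.G (F : Type*) [CommRing F] : Set (PowerSeries F) :=
  {f | PowerSeries.constantCoeff (R := F) f = 0 ∧ PowerSeries.coeff (R := F) 1 f ≠ 0}

/-- `n`-fold compositional iterate of `f`. -/
noncomputable def PS.iter {F : Type*} [CommRing F] (f : PowerSeries F) : ℕ → PowerSeries F
  | 0 => PowerSeries.X
  | n + 1 => PS.comp f (PS.iter f n)

/-- `f` has compositional order exactly `n`. -/
def PS.HasOrder {F : Type*} [CommRing F] (f : PowerSeries F) (n : ℕ) : Prop :=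
  PS.iter f n = PowerSeries.X ∧ ∀ m, 0 < m → m < n → PS.iter f m ≠ PowerSeries.X

namespace PSAux

open Finset

variable {F : Type*} [CommRing F]

lemma coeff_comp (f g : PowerSeries F) (k : ℕ) :
    coeff (R := F) k (PS.comp f g) = ∑ n ∈ range (k + 1), coeff (R := F) n f * coeff (R := F) k (g ^ n) := by
  simp [PS.comp]

lemma coeff_pow_eq_zero {g : PowerSeries F} (hg : constantCoeff (R := F) g = 0)
    {i m : ℕ} (h : i < m) : coeff (R := F) i (g ^ m) = 0 := by
  have hd : (X : PowerSeries F) ^ m ∣ g ^ m :=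
    pow_dvd_pow_of_dvd (X_dvd_iff.mpr hg) m
  exact X_pow_dvd_iff.mp hd i h

lemma constantCoeff_comp (f g : PowerSeries F) :
    constantCoeff (R := F) (PS.comp f g) = constantCoeff (R := F) f := by
  have h := coeff_comp f g 0
  simpa using h

lemma coeff_one_comp (f g : PowerSeries F) :
    coeff (R := F) 1 (PS.comp f g) = coeff (R := F) 1 f * coeff (R := F) 1 g := by
  rw [coeff_comp]
  simp [Finset.sum_range_succ]

lemma constantCoeff_iter {f : PowerSeries F} (hf : constantCoeff (R := F) f = 0) (m : ℕ) :
    constantCoeff (R := F) (PS.iter f m) = 0 := by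
  induction m with
  | zero => simp [PS.iter]
  | succ m _ => rw [PS.iter, constantCoeff_comp]; exact hf

lemma coeff_one_iter (f : PowerSeries F) (m : ℕ) :
    coeff (R := F) 1 (PS.iter f m) = (coeff (R := F) 1 f) ^ m := by
  induction m with
  | zero => simp [PS.iter]
  | succ m ih => rw [PS.iter, coeff_one_comp, ih, pow_succ]; ring

lemma comp_X_left {g : PowerSeries F} (hg : constantCoeff (R := F) g = 0) :
    PS.comp PowerSeries.X g = g := by
  ext k
  rw [coeff_comp, Finset.sum_eq_single 1]
  · simp
  · intro b _ hb
    simp [PowerSeries.coeff_X, hb]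
  · intro h1
    have hk : k = 0 := by
      simp only [Finset.mem_range] at h1; omega
    subst hk
    simp [hg]

lemma comp_X_right (f : PowerSeries F) : PS.comp f PowerSeries.X = f := by
  ext k
  rw [coeff_comp, Finset.sum_eq_single k]
  · simp [PowerSeries.coeff_X_pow]
  · intro b _ hb
    simp [PowerSeries.coeff_X_pow, Ne.symm hb]
  · intro h; simp at h

lemma coeff_aeval {g : PowerSeries F} (hg : constantCoeff (R := F) g = 0) (p : Polynomial F) (k : ℕ) :
    coeff (R := F) k (Polynomial.aeval g p) = ∑ i ∈ range (k + 1), p.coeff i * coeff (R := F) k (g ^ i) := by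
  set M := max (p.natDegree + 1) (k + 1) with hM
  have hdeg : p.natDegree < M := lt_of_lt_of_le (Nat.lt_succ_self _) (le_max_left _ _)
  rw [Polynomial.aeval_eq_sum_range' hdeg g, map_sum]
  have hsub : range (k + 1) ⊆ range M :=
    Finset.range_subset_range.mpr (le_max_right _ _)
  rw [← Finset.sum_subset hsub]
  · exact Finset.sum_congr rfl fun i _ => by
      simp [smul_eq_mul]
  · intro i _ hi
    have hik : k < i := by simp only [Finset.mem_range] at hi; omega
    simp [coeff_pow_eq_zero hg hik]

lemma coeff_comp_eq_aeval {g : PowerSeries F} (hg : constantCoeff (R := F) g = 0)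
    (f : PowerSeries F) {j k : ℕ} (hjk : j ≤ k) :
    coeff (R := F) j (PS.comp f g) = coeff (R := F) j (Polynomial.aeval g (trunc (k + 1) f)) := by
  rw [coeff_comp, coeff_aeval hg]
  refine Finset.sum_congr rfl fun i hi => ?_
  have hij : i < j + 1 := by simpa using hi
  rw [coeff_trunc, if_pos (by omega)]

lemma comp_one (g : PowerSeries F) : PS.comp 1 g = 1 := by
  ext k
  rw [coeff_comp, Finset.sum_eq_single 0]
  · simp
  · intro b _ hb
    simp [PowerSeries.coeff_one, hb]
  · intro h; simp at h

lemma comp_mul {g : PowerSeries F} (hg : constantCoeff (R := F) g = 0) (f₁ f₂ : PowerSeries F) :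
    PS.comp (f₁ * f₂) g = PS.comp f₁ g * PS.comp f₂ g := by
  ext k
  have h1 : coeff (R := F) k (PS.comp (f₁ * f₂) g)
      = coeff (R := F) k (Polynomial.aeval g (trunc (k + 1) f₁ * trunc (k + 1) f₂)) := by
    rw [coeff_comp, coeff_aeval hg]
    refine Finset.sum_congr rfl fun i hi => ?_
    have hik : i < k + 1 := by simpa using hi
    congr 1
    -- coeff i (f₁ * f₂) = (trunc f₁ * trunc f₂).coeff i
    rw [PowerSeries.coeff_mul, Polynomial.coeff_mul]
    refine Finset.sum_congr rfl fun x hx => ?_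
    have hxi : x.1 + x.2 = i := Finset.HasAntidiagonal.mem_antidiagonal.mp hx
    rw [coeff_trunc, coeff_trunc, if_pos (by omega), if_pos (by omega)]
  rw [h1, map_mul, PowerSeries.coeff_mul, PowerSeries.coeff_mul]
  refine Finset.sum_congr rfl fun x hx => ?_
  have hxi : x.1 + x.2 = k := Finset.HasAntidiagonal.mem_antidiagonal.mp hx
  rw [← coeff_comp_eq_aeval hg f₁ (by omega : x.1 ≤ k),
    ← coeff_comp_eq_aeval hg f₂ (by omega : x.2 ≤ k)]

lemma comp_pow {g : PowerSeries F} (hg : constantCoeff (R := F) g = 0) (f : PowerSeries F) (m : ℕ) :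
    PS.comp (f ^ m) g = (PS.comp f g) ^ m := by
  induction m with
  | zero => simpa using comp_one g
  | succ m ih => rw [pow_succ, comp_mul hg, ih, pow_succ]

lemma comp_assoc {f g h : PowerSeries F} (hg : constantCoeff (R := F) g = 0)
    (hh : constantCoeff (R := F) h = 0) :
    PS.comp (PS.comp f g) h = PS.comp f (PS.comp g h) := by
  ext k
  rw [coeff_comp, coeff_comp]
  have lhs : ∀ n ∈ range (k + 1),
      coeff (R := F) n (PS.comp f g) * coeff (R := F) k (h ^ n)
        = ∑ m ∈ range (k + 1), coeff (R := F) m f * coeff (R := F) n (g ^ m) * coeff (R := F) k (h ^ n) := by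
    intro n hn
    have hnk : n < k + 1 := by simpa using hn
    rw [coeff_comp, ← Finset.sum_mul]
    congr 1
    refine Finset.sum_subset (Finset.range_subset_range.mpr (by omega)) ?_
    intro m _ hm
    have : n < m := by simp only [Finset.mem_range] at hm ⊢; omega
    simp [coeff_pow_eq_zero hg this]
  have rhs : ∀ m ∈ range (k + 1),
      coeff (R := F) m f * coeff (R := F) k ((PS.comp g h) ^ m)
        = ∑ n ∈ range (k + 1), coeff (R := F) m f * (coeff (R := F) n (g ^ m) * coeff (R := F) k (h ^ n)) := by
    intro m _
    rw [← comp_pow hh g m, coeff_comp, Finset.mul_sum]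
  refine Eq.trans (Finset.sum_congr rfl lhs) (Eq.trans ?_ (Finset.sum_congr rfl rhs).symm)
  rw [Finset.sum_comm]
  refine Finset.sum_congr rfl fun n _ => Finset.sum_congr rfl fun m _ => by ring

lemma iter_add {f : PowerSeries F} (hf : constantCoeff (R := F) f = 0) (a b : ℕ) :
    PS.iter f (a + b) = PS.comp (PS.iter f a) (PS.iter f b) := by
  induction a with
  | zero =>
      simp only [Nat.zero_add]
      rw [show PS.iter f 0 = PowerSeries.X from rfl, comp_X_left (constantCoeff_iter hf b)]
  | succ a ih =>
      have h1 : a + 1 + b = (a + b) + 1 := by omega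
      rw [h1, PS.iter, ih, ← comp_assoc (constantCoeff_iter hf a) (constantCoeff_iter hf b)]
      rfl

lemma iter_mul {f : PowerSeries F} (hf : constantCoeff (R := F) f = 0) (a b : ℕ) :
    PS.iter f (a * b) = PS.iter (PS.iter f a) b := by
  induction b with
  | zero => rfl
  | succ b ih =>
      rw [PS.iter, ← ih, ← iter_add hf, Nat.mul_succ, Nat.add_comm]

lemma iter_X (m : ℕ) : PS.iter (PowerSeries.X : PowerSeries F) m = PowerSeries.X := by
  induction m with
  | zero => rfl
  | succ m ih => rw [PS.iter, ih, comp_X_right]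

end PSAux

namespace PSAux

section KeyLemma

open Finset

variable {F : Type*} [Field F] [CharZero F]

/-- coefficients of powers of a series agreeing with X below k -/
lemma pow_coeff {k : ℕ} (hk2 : 2 ≤ k) {h : PowerSeries F}
    (H : ∀ j, j < k → coeff (R := F) j h = coeff (R := F) j (PowerSeries.X : PowerSeries F))
    (n : ℕ) : ∀ i ≤ k, coeff (R := F) i (h ^ n)
      = coeff (R := F) i ((PowerSeries.X : PowerSeries F) ^ n)
        + (if n = 1 ∧ i = k then coeff (R := F) k h else 0) := by
  have hh0 : constantCoeff (R := F) h = 0 := by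
    have := H 0 (by omega)
    simpa using this
  induction n with
  | zero =>
      intro i _
      rw [pow_zero, pow_zero, if_neg (by omega), add_zero]
  | succ n ih =>
      intro i hik
      rw [pow_succ, PowerSeries.coeff_mul]
      have hterm : ∀ x ∈ Finset.HasAntidiagonal.antidiagonal i,
          coeff (R := F) x.1 (h ^ n) * coeff (R := F) x.2 h
            = coeff (R := F) x.1 ((PowerSeries.X : PowerSeries F) ^ n) * coeff (R := F) x.2 h
              + (if n = 1 ∧ x.1 = k then coeff (R := F) k h else 0) * coeff (R := F) x.2 h := by
        intro x hx
        have hxi : x.1 + x.2 = i := Finset.HasAntidiagonal.mem_antidiagonal.mp hx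
        rw [ih x.1 (by omega), add_mul]
      refine Eq.trans (Finset.sum_congr rfl hterm) ?_
      rw [Finset.sum_add_distrib]
      have hz : ∑ x ∈ Finset.HasAntidiagonal.antidiagonal i,
          (if n = 1 ∧ x.1 = k then coeff (R := F) k h else 0) * coeff (R := F) x.2 h = 0 := by
        refine Finset.sum_eq_zero fun x hx => ?_
        have hxi : x.1 + x.2 = i := Finset.HasAntidiagonal.mem_antidiagonal.mp hx
        by_cases hc : n = 1 ∧ x.1 = k
        · have hx2 : x.2 = 0 := by omega
          rw [hx2]
          have h0 : coeff (R := F) 0 h = 0 := by simpa using hh0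
          rw [h0, mul_zero]
        · rw [if_neg hc, zero_mul]
      rw [hz, add_zero, ← PowerSeries.coeff_mul]
      -- now coeff i (X^n * h)
      by_cases hni : n ≤ i
      · have hXh : coeff (R := F) i ((PowerSeries.X : PowerSeries F) ^ n * h)
            = coeff (R := F) (i - n) h := by
          have h' := PowerSeries.coeff_X_pow_mul h n (i - n)
          rwa [Nat.sub_add_cancel hni] at h'
        rw [hXh]
        rcases Nat.eq_zero_or_pos n with hn0 | hn0
        · subst hn0
          simp only [Nat.sub_zero]
          by_cases hik' : i = k
          · have hk1 : k ≠ 1 := by omega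
            simp [hik', PowerSeries.coeff_X_pow, PowerSeries.coeff_X, hk1]
          · rw [H i (by omega), if_neg (by tauto), add_zero, pow_one]
        · have hlt : i - n < k := by omega
          rw [H (i - n) hlt]
          have h1 : coeff (R := F) (i - n) (PowerSeries.X : PowerSeries F)
              = if i - n = 1 then 1 else 0 := PowerSeries.coeff_X _
          have h2 : coeff (R := F) i ((PowerSeries.X : PowerSeries F) ^ (n + 1))
              = if i = n + 1 then 1 else 0 := PowerSeries.coeff_X_pow _ _
          rw [h1, h2, if_neg (by omega : ¬(n + 1 = 1 ∧ i = k)), add_zero]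
          congr 1
          · simp only [eq_iff_iff]; omega
      · have hdvd : (PowerSeries.X : PowerSeries F) ^ n
            ∣ (PowerSeries.X : PowerSeries F) ^ n * h := dvd_mul_right _ _
        rw [X_pow_dvd_iff.mp hdvd i (by omega)]
        rw [PowerSeries.coeff_X_pow, if_neg (by omega), if_neg (by omega), add_zero]

lemma step_coeff {k : ℕ} (hk2 : 2 ≤ k) {g h : PowerSeries F}
    (hgmin : ∀ j, j < k → coeff (R := F) j g = coeff (R := F) j (PowerSeries.X : PowerSeries F))
    (H : ∀ j, j < k → coeff (R := F) j h = coeff (R := F) j (PowerSeries.X : PowerSeries F))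
    {i : ℕ} (hik : i ≤ k) :
    coeff (R := F) i (PS.comp g h) = coeff (R := F) i g + (if i = k then coeff (R := F) k h else 0) := by
  rw [coeff_comp]
  have hterm : ∀ n ∈ range (i + 1),
      coeff (R := F) n g * coeff (R := F) i (h ^ n)
        = coeff (R := F) n g * coeff (R := F) i ((PowerSeries.X : PowerSeries F) ^ n)
          + coeff (R := F) n g * (if n = 1 ∧ i = k then coeff (R := F) k h else 0) := by
    intro n _
    rw [pow_coeff hk2 H n i hik, mul_add]
  refine Eq.trans (Finset.sum_congr rfl hterm) ?_
  rw [Finset.sum_add_distrib]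
  congr 1
  · rw [Finset.sum_eq_single i]
    · simp [PowerSeries.coeff_X_pow]
    · intro b _ hb
      rw [PowerSeries.coeff_X_pow, if_neg (Ne.symm hb), mul_zero]
    · intro hcon; simp at hcon
  · by_cases hik' : i = k
    · subst hik'
      rw [Finset.sum_eq_single 1]
      · rw [if_pos ⟨rfl, rfl⟩, hgmin 1 (by omega), PowerSeries.coeff_one_X, one_mul,
          if_pos rfl]
      · intro b _ hb
        rw [if_neg (by tauto), mul_zero]
      · intro hcon
        simp only [Finset.mem_range] at hcon; omega
    · rw [if_neg hik']
      refine Finset.sum_eq_zero fun n _ => ?_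
      rw [if_neg (by tauto), mul_zero]

lemma iter_fixed {g : PowerSeries F} (hg0 : constantCoeff (R := F) g = 0)
    (hg1 : coeff (R := F) 1 g = 1) {N : ℕ} (hN : 0 < N)
    (hiter : PS.iter g N = PowerSeries.X) : g = PowerSeries.X := by
  by_contra hne
  have hexists : ∃ i, coeff (R := F) i g ≠ coeff (R := F) i (PowerSeries.X : PowerSeries F) := by
    by_contra hcon
    push_neg at hcon
    exact hne (PowerSeries.ext hcon)
  classical
  set k := Nat.find hexists with hk
  have hkspec : coeff (R := F) k g ≠ coeff (R := F) k (PowerSeries.X : PowerSeries F) :=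
    Nat.find_spec hexists
  have hmin : ∀ j, j < k → coeff (R := F) j g = coeff (R := F) j (PowerSeries.X : PowerSeries F) :=
    fun j hj => by simpa using Nat.find_min hexists hj
  have hk2 : 2 ≤ k := by
    by_contra hcon
    interval_cases k
    · exact hkspec (by simpa using hg0)
    · exact hkspec (by rw [hg1, PowerSeries.coeff_one_X])
  have hXk : coeff (R := F) k (PowerSeries.X : PowerSeries F) = 0 := by
    rw [PowerSeries.coeff_X, if_neg (by omega)]
  set a := coeff (R := F) k g with ha
  have ha0 : a ≠ 0 := by rw [ha]; rw [hXk] at hkspec; exact hkspec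
  -- induction: coefficients of iterates
  have key : ∀ j : ℕ, (∀ i, i < k → coeff (R := F) i (PS.iter g j)
      = coeff (R := F) i (PowerSeries.X : PowerSeries F))
      ∧ coeff (R := F) k (PS.iter g j) = (j : F) * a := by
    intro j
    induction j with
    | zero =>
        constructor
        · intro i _; rfl
        · simp [PS.iter, hXk]
    | succ j ih =>
        constructor
        · intro i hik
          rw [PS.iter, step_coeff hk2 hmin ih.1 (by omega), if_neg (by omega),
            add_zero, hmin i hik]
        · rw [PS.iter, step_coeff hk2 hmin ih.1 (le_refl k), if_pos rfl, ih.2]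
          push_cast
          ring
  have hNa : (N : F) * a = 0 := by
    have := (key N).2
    rw [hiter, hXk] at this
    exact this.symm
  have hNne : (N : F) ≠ 0 := Nat.cast_ne_zero.mpr (by omega)
  exact ha0 ((mul_eq_zero.mp hNa).resolve_left hNne)

end KeyLemma

end PSAux

theorem stmt_4 (F : Type*) [Field F] [CharZero F] (f : PowerSeries F) (hf : f ∈ PS.G F)
    (n : ℕ) (hn : 0 < n) (hord : PS.HasOrder f n) :
    (PowerSeries.coeff (R := F) 1 f) ^ n = 1 ∧
    ∀ m, 0 < m → m < n → (PowerSeries.coeff (R := F) 1 f) ^ m ≠ 1 := by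
  obtain ⟨hf0, hf1⟩ := hf
  constructor
  · have h := PSAux.coeff_one_iter f n
    rw [hord.1, PowerSeries.coeff_one_X] at h
    exact h.symm
  · intro m hm hmn hpow
    set g := PS.iter f m with hg
    have hg0 : PowerSeries.constantCoeff (R := F) g = 0 := PSAux.constantCoeff_iter hf0 m
    have hg1 : PowerSeries.coeff (R := F) 1 g = 1 := by
      rw [hg, PSAux.coeff_one_iter, hpow]
    have hiter : PS.iter g n = PowerSeries.X := by
      rw [hg, ← PSAux.iter_mul hf0, Nat.mul_comm, PSAux.iter_mul hf0, hord.1,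
        PSAux.iter_X]
    have := PSAux.iter_fixed hg0 hg1 hn hiter
    exact hord.2 m hm hmn this
end

section
/- Two elements of finite order n in the group G of formal power series under composition are conjugate in G if and only if their linear coefficients are equal (and this common value is a primitive n-th root of unity). -/
open PowerSeries

set_option linter.unnecessarySeqFocus false

namespace PS
variable {F : Type*} [CommRing F]

theorem coeff_comp (f g : PowerSeries F) (k : ℕ) :
    coeff (R := F) k (PS.comp f g) =
      ∑ n ∈ Finset.range (k + 1), (coeff (R := F) n f) * (coeff (R := F) k (g ^ n)) := by
  simp [PS.comp]

theorem coeff_pow_lt {g : PowerSeries F} (hg : constantCoeff (R := F) g = 0)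
    {k n : ℕ} (h : k < n) : coeff (R := F) k (g ^ n) = 0 := by
  have : (X : PowerSeries F) ^ n ∣ g ^ n := pow_dvd_pow_of_dvd (X_dvd_iff.2 hg) n
  exact (X_pow_dvd_iff.1 this) k h

theorem coeff_pow_self {g : PowerSeries F} (hg : constantCoeff (R := F) g = 0)
    (n : ℕ) : coeff (R := F) n (g ^ n) = (coeff (R := F) 1 g) ^ n := by
  induction n with
  | zero => simp
  | succ n ih =>
    rw [pow_succ, PowerSeries.coeff_mul]
    rw [Finset.sum_eq_single (n, 1)]
    · rw [ih, pow_succ]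
    · rintro ⟨a, b⟩ hab hne
      rw [Finset.HasAntidiagonal.mem_antidiagonal] at hab
      rcases lt_trichotomy a n with h | h | h
      · rw [coeff_pow_lt hg h, zero_mul]
      · exfalso; apply hne
        have hb : b = 1 := by omega
        subst h; subst hb; rfl
      · have hb : b = 0 := by omega
        subst hb
        rw [coeff_zero_eq_constantCoeff, hg, mul_zero]
    · intro h
      exact absurd (Finset.HasAntidiagonal.mem_antidiagonal.2 (by omega)) h

theorem constantCoeff_comp (f g : PowerSeries F) :
    constantCoeff (R := F) (PS.comp f g) = constantCoeff (R := F) f := by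
  have := coeff_comp f g 0
  simpa using this

theorem coeff_one_comp (f g : PowerSeries F) :
    coeff (R := F) 1 (PS.comp f g) = coeff (R := F) 1 f * coeff (R := F) 1 g := by
  rw [coeff_comp]
  simp [Finset.sum_range_succ]

theorem comp_X (f : PowerSeries F) : PS.comp f X = f := by
  ext k
  rw [coeff_comp, Finset.sum_eq_single k]
  · simp [coeff_X_pow]
  · intro n _ hn
    rw [← pow_one (X : PowerSeries F), ← pow_mul, one_mul, coeff_X_pow,
      if_neg (Ne.symm hn), mul_zero]
  · intro h; exact absurd (Finset.self_mem_range_succ k) h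

theorem X_comp {g : PowerSeries F} (hg : constantCoeff (R := F) g = 0) : PS.comp X g = g := by
  ext k
  rw [coeff_comp]
  rcases Nat.eq_zero_or_pos k with rfl | hk
  · simp [hg]
  · rw [Finset.sum_eq_single 1]
    · simp
    · intro n _ hn
      rw [coeff_X, if_neg hn, zero_mul]
    · intro h; exact absurd (Finset.mem_range.2 (by omega)) h

theorem one_comp (g : PowerSeries F) : PS.comp 1 g = 1 := by
  ext k
  rw [coeff_comp, Finset.sum_eq_single 0]
  · simp
  · intro n _ hn
    rw [coeff_one, if_neg hn, zero_mul]
  · intro h; exact absurd (Finset.mem_range.2 (by omega)) h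

theorem add_comp (f₁ f₂ g : PowerSeries F) :
    PS.comp (f₁ + f₂) g = PS.comp f₁ g + PS.comp f₂ g := by
  ext k
  rw [map_add, coeff_comp, coeff_comp, coeff_comp, ← Finset.sum_add_distrib]
  exact Finset.sum_congr rfl fun n _ => by rw [map_add, add_mul]

theorem C_mul_comp (a : F) (f g : PowerSeries F) :
    PS.comp (C (R := F) a * f) g = C (R := F) a * PS.comp f g := by
  ext k
  rw [coeff_comp, PowerSeries.coeff_C_mul, coeff_comp, Finset.mul_sum]
  exact Finset.sum_congr rfl fun n _ => by rw [PowerSeries.coeff_C_mul, mul_assoc]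


variable {F : Type*} [CommRing F]

theorem coeff_comp_ext {g : PowerSeries F} (hg : constantCoeff (R := F) g = 0)
    (f : PowerSeries F) {a k : ℕ} (hak : a ≤ k) :
    coeff (R := F) a (PS.comp f g) =
      ∑ i ∈ Finset.range (k + 1), coeff (R := F) i f * coeff (R := F) a (g ^ i) := by
  rw [coeff_comp]
  apply Finset.sum_subset
  · intro x hx
    simp only [Finset.mem_range] at hx ⊢
    omega
  · intro i _ hi
    simp only [Finset.mem_range] at hi
    rw [coeff_pow_lt hg (by omega), mul_zero]

theorem mul_comp {g : PowerSeries F} (hg : constantCoeff (R := F) g = 0) (u v : PowerSeries F) :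
    PS.comp (u * v) g = PS.comp u g * PS.comp v g := by
  ext k
  rw [coeff_comp, PowerSeries.coeff_mul]
  set Fn : ℕ × ℕ → F := fun p => coeff (R := F) p.1 u * coeff (R := F) p.2 v * coeff (R := F) k (g ^ (p.1 + p.2))
    with hFn
  have hL : ∑ n ∈ Finset.range (k + 1), coeff (R := F) n (u * v) * coeff (R := F) k (g ^ n)
      = ∑ p ∈ (Finset.range (k+1)).biUnion (fun n => Finset.HasAntidiagonal.antidiagonal n), Fn p := by
    rw [Finset.sum_biUnion]
    · apply Finset.sum_congr rfl
      intro n _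
      rw [PowerSeries.coeff_mul, Finset.sum_mul]
      apply Finset.sum_congr rfl
      rintro ⟨i, j⟩ hij
      rw [Finset.HasAntidiagonal.mem_antidiagonal] at hij
      simp only [hFn, hij]
    · intro a _ b _ hab
      simp only [Function.onFun, Finset.disjoint_left]
      intro p hp hp'
      rw [Finset.HasAntidiagonal.mem_antidiagonal] at hp hp'
      exact hab (hp ▸ hp')
  have hsub : ∑ p ∈ (Finset.range (k+1)).biUnion (fun n => Finset.HasAntidiagonal.antidiagonal n), Fn p
      = ∑ p ∈ Finset.range (k+1) ×ˢ Finset.range (k+1), Fn p := by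
    apply Finset.sum_subset
    · rintro ⟨i, j⟩ hp
      simp only [Finset.mem_biUnion, Finset.mem_range, Finset.HasAntidiagonal.mem_antidiagonal] at hp
      obtain ⟨n, hn, hij⟩ := hp
      simp only [Finset.mem_product, Finset.mem_range]
      omega
    · rintro ⟨i, j⟩ hp hnp
      simp only [Finset.mem_biUnion, Finset.mem_range, Finset.HasAntidiagonal.mem_antidiagonal] at hnp
      push_neg at hnp
      have : k < i + j := by
        by_contra h
        exact absurd rfl (hnp (i + j) (by omega))
      simp only [hFn, coeff_pow_lt hg this, mul_zero]
  rw [hL, hsub, Finset.sum_product]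
  symm
  calc ∑ p ∈ Finset.HasAntidiagonal.antidiagonal k, coeff (R := F) p.1 (PS.comp u g) * coeff (R := F) p.2 (PS.comp v g)
      = ∑ p ∈ Finset.HasAntidiagonal.antidiagonal k, ∑ i ∈ Finset.range (k+1), ∑ j ∈ Finset.range (k+1),
          coeff (R := F) i u * coeff (R := F) j v * (coeff (R := F) p.1 (g ^ i) * coeff (R := F) p.2 (g ^ j)) := by
        apply Finset.sum_congr rfl
        rintro ⟨a, b⟩ hab
        rw [Finset.HasAntidiagonal.mem_antidiagonal] at hab
        rw [coeff_comp_ext hg u (show a ≤ k by omega),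
            coeff_comp_ext hg v (show b ≤ k by omega), Finset.sum_mul_sum]
        apply Finset.sum_congr rfl; intro i _
        apply Finset.sum_congr rfl; intro j _
        ring
    _ = ∑ i ∈ Finset.range (k+1), ∑ j ∈ Finset.range (k+1),
          ∑ p ∈ Finset.HasAntidiagonal.antidiagonal k,
          coeff (R := F) i u * coeff (R := F) j v * (coeff (R := F) p.1 (g ^ i) * coeff (R := F) p.2 (g ^ j)) := by
        rw [Finset.sum_comm]
        apply Finset.sum_congr rfl; intro i _
        rw [Finset.sum_comm]
    _ = ∑ i ∈ Finset.range (k+1), ∑ j ∈ Finset.range (k+1), Fn (i, j) := by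
        apply Finset.sum_congr rfl; intro i _
        apply Finset.sum_congr rfl; intro j _
        rw [← Finset.mul_sum, ← PowerSeries.coeff_mul, ← pow_add]

theorem pow_comp {g : PowerSeries F} (hg : constantCoeff (R := F) g = 0) (u : PowerSeries F) (m : ℕ) :
    PS.comp (u ^ m) g = (PS.comp u g) ^ m := by
  induction m with
  | zero => simpa using one_comp g
  | succ m ih => rw [pow_succ, mul_comp hg, ih, pow_succ]

theorem comp_assoc {g h : PowerSeries F} (hg : constantCoeff (R := F) g = 0)
    (hh : constantCoeff (R := F) h = 0) (f : PowerSeries F) :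
    PS.comp (PS.comp f g) h = PS.comp f (PS.comp g h) := by
  ext k
  rw [coeff_comp, coeff_comp]
  calc ∑ m ∈ Finset.range (k+1), coeff (R := F) m (PS.comp f g) * coeff (R := F) k (h ^ m)
      = ∑ m ∈ Finset.range (k+1), ∑ n ∈ Finset.range (k+1),
          coeff (R := F) n f * coeff (R := F) m (g ^ n) * coeff (R := F) k (h ^ m) := by
        apply Finset.sum_congr rfl; intro m hm
        rw [Finset.mem_range] at hm
        rw [coeff_comp_ext hg f (show m ≤ k by omega), Finset.sum_mul]
    _ = ∑ n ∈ Finset.range (k+1), coeff (R := F) n f * coeff (R := F) k ((PS.comp g h) ^ n) := by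
        rw [Finset.sum_comm]
        apply Finset.sum_congr rfl; intro n _
        rw [← pow_comp hh, coeff_comp, Finset.mul_sum]
        apply Finset.sum_congr rfl; intro m _
        ring
variable {F : Type*} [Field F]

noncomputable def invCoeff (h : PowerSeries F) : ℕ → F
  | 0 => 0
  | j+1 => ((coeff (R := F) 1 h) ^ (j+1))⁻¹ *
      ((if j + 1 = 1 then 1 else 0) - ∑ m ∈ (Finset.range (j+1)).attach,
        invCoeff h m.1 * coeff (R := F) (j+1) (h ^ (m.1 : ℕ)))
  decreasing_by exact Finset.mem_range.1 m.2

theorem left_inv_exists {h : PowerSeries F} (hh : constantCoeff (R := F) h = 0)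
    (hc : coeff (R := F) 1 h ≠ 0) :
    ∃ k : PowerSeries F, constantCoeff (R := F) k = 0 ∧ coeff (R := F) 1 k ≠ 0 ∧ PS.comp k h = X := by
  set c := coeff (R := F) 1 h with hcdef
  refine ⟨PowerSeries.mk (invCoeff h), ?_, ?_, ?_⟩
  · simp [PowerSeries.coeff_zero_eq_constantCoeff.symm, invCoeff]
  · rw [PowerSeries.coeff_mk]
    show invCoeff h 1 ≠ 0
    rw [invCoeff]
    have h0 : ∑ m ∈ (Finset.range 1).attach, invCoeff h m.1 * coeff (R := F) 1 (h ^ (m.1 : ℕ)) = 0 := by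
      rw [Finset.sum_attach (Finset.range 1) (fun m => invCoeff h m * coeff (R := F) 1 (h ^ m))]
      simp [invCoeff]
    rw [h0]
    simp [← hcdef, hc]
  · ext j
    rw [coeff_comp]
    rcases Nat.eq_zero_or_pos j with rfl | hj
    · simp [invCoeff]
    · obtain ⟨j', rfl⟩ : ∃ j', j = j' + 1 := ⟨j - 1, by omega⟩
      have hstep : invCoeff h (j' + 1) * (c ^ (j'+1)) =
          (if j' + 1 = 1 then 1 else 0) - ∑ m ∈ Finset.range (j'+1),
            invCoeff h m * coeff (R := F) (j'+1) (h ^ m) := by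
        rw [invCoeff, ← Finset.sum_attach (Finset.range (j'+1))
          (fun m => invCoeff h m * coeff (R := F) (j'+1) (h ^ m))]
        field_simp
        rw [← hcdef, mul_div_assoc, div_self (pow_ne_zero _ hc), mul_one]
      rw [Finset.sum_range_succ]
      simp only [PowerSeries.coeff_mk]
      rw [coeff_pow_self hh, ← hcdef, hstep]
      rw [coeff_X]
      ring_nf

theorem inv_exists {h : PowerSeries F} (hh : constantCoeff (R := F) h = 0)
    (hc : coeff (R := F) 1 h ≠ 0) :
    ∃ k : PowerSeries F, constantCoeff (R := F) k = 0 ∧ coeff (R := F) 1 k ≠ 0 ∧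
      PS.comp k h = X ∧ PS.comp h k = X := by
  obtain ⟨k, hk0, hk1, hkh⟩ := left_inv_exists hh hc
  obtain ⟨k', hk'0, _, hk'k⟩ := left_inv_exists hk0 hk1
  have : h = k' := by
    calc h = PS.comp X h := (X_comp hh).symm
    _ = PS.comp (PS.comp k' k) h := by rw [hk'k]
    _ = PS.comp k' (PS.comp k h) := comp_assoc hk0 hh k'
    _ = k' := by rw [hkh]; exact comp_X k'
  exact ⟨k, hk0, hk1, hkh, this ▸ hk'k⟩

variable {F : Type*} [CommRing F]
theorem constantCoeff_iter {f : PowerSeries F} (hf : constantCoeff (R := F) f = 0) (m : ℕ) :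
    constantCoeff (R := F) (PS.iter f m) = 0 := by
  cases m with
  | zero => simp [PS.iter]
  | succ m => rw [PS.iter, constantCoeff_comp]; exact hf

theorem coeff_one_iter (f : PowerSeries F) (m : ℕ) :
    coeff (R := F) 1 (PS.iter f m) = (coeff (R := F) 1 f) ^ m := by
  induction m with
  | zero => simp [PS.iter]
  | succ m ih => rw [PS.iter, coeff_one_comp, ih, pow_succ]; ring

theorem iter_add {f : PowerSeries F} (hf : constantCoeff (R := F) f = 0) (a b : ℕ) :
    PS.iter f (a + b) = PS.comp (PS.iter f a) (PS.iter f b) := by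
  induction a with
  | zero => simp [PS.iter, X_comp (constantCoeff_iter hf b)]
  | succ a ih =>
    have : a + 1 + b = (a + b) + 1 := by omega
    rw [this, PS.iter, ih, ← comp_assoc (constantCoeff_iter hf a) (constantCoeff_iter hf b)]
    rfl

theorem iter_X (m : ℕ) : PS.iter (X : PowerSeries F) m = X := by
  induction m with
  | zero => rfl
  | succ m ih => rw [PS.iter, ih, comp_X]

theorem iter_mul {f : PowerSeries F} (hf : constantCoeff (R := F) f = 0) (a b : ℕ) :
    PS.iter f (a * b) = PS.iter (PS.iter f a) b := by
  induction b with
  | zero => simp [PS.iter]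
  | succ b ih =>
    have : a * (b + 1) = a + a * b := by ring
    rw [this, iter_add hf, PS.iter, ih]

theorem sum_comp {ι : Type*} (s : Finset ι) (u : ι → PowerSeries F) (g : PowerSeries F) :
    PS.comp (∑ j ∈ s, u j) g = ∑ j ∈ s, PS.comp (u j) g := by
  ext k
  rw [coeff_comp]
  simp only [map_sum, Finset.sum_mul]
  rw [Finset.sum_comm]
  exact Finset.sum_congr rfl fun j _ => (coeff_comp _ _ _).symm

variable {F : Type*} [Field F] [CharZero F]

/-- rigidity: a series `X + higher` of finite compositional order is `X`. -/
theorem rigid {u : PowerSeries F} (h0 : constantCoeff (R := F) u = 0)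
    (h1 : coeff (R := F) 1 u = 1) {n : ℕ} (hn : 0 < n) (hit : PS.iter u n = X) : u = X := by
  by_contra hne
  have hex : ∃ r, coeff (R := F) r u ≠ coeff (R := F) r X := by
    by_contra h
    push_neg at h
    exact hne (PowerSeries.ext h)
  classical
  set r := Nat.find hex with hr
  have hrspec : coeff (R := F) r u ≠ coeff (R := F) r X := Nat.find_spec hex
  have hrmin : ∀ j < r, coeff (R := F) j u = coeff (R := F) j X := fun j hj => by
    have h2 := Nat.find_min hex (show j < Nat.find hex by rw [← hr]; exact hj)
    exact not_not.1 h2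
  have hr2 : 2 ≤ r := by
    rcases Nat.lt_or_ge r 2 with h | h
    · interval_cases r
      · exact absurd (by simp [coeff_zero_eq_constantCoeff, h0]) hrspec
      · exact absurd (by simp [h1]) hrspec
    · exact h
  -- Good predicate
  set Good : PowerSeries F → Prop := fun v =>
    constantCoeff (R := F) v = 0 ∧ coeff (R := F) 1 v = 1 ∧ ∀ j, 2 ≤ j → j < r → coeff (R := F) j v = 0
    with hGood
  have hXGood : Good X := by
    refine ⟨by simp, by simp, fun j h2 _ => ?_⟩
    rw [coeff_X, if_neg (by omega)]
  have huGood : Good u := by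
    refine ⟨h0, h1, fun j h2 hjr => ?_⟩
    rw [hrmin j hjr, coeff_X, if_neg (by omega)]
  have key : ∀ v w, Good v → Good w → ∀ j, 2 ≤ j → j ≤ r →
      coeff (R := F) j (PS.comp v w) = coeff (R := F) j v + coeff (R := F) j w := by
    intro v w hv hw j h2 hjr
    rw [coeff_comp]
    have hsub : ({1, j} : Finset ℕ) ⊆ Finset.range (j + 1) := by
      intro x hx
      simp only [Finset.mem_insert, Finset.mem_singleton] at hx
      rcases hx with rfl | rfl <;> simp [Finset.mem_range] <;> omega
    rw [← Finset.sum_subset hsub]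
    · rw [Finset.sum_pair (by omega : (1:ℕ) ≠ j), hv.2.1, one_mul, pow_one,
        coeff_pow_self hw.1, hw.2.1, one_pow, mul_one, add_comm]
    · intro m hm hnm
      simp only [Finset.mem_range] at hm
      simp only [Finset.mem_insert, Finset.mem_singleton, not_or] at hnm
      rcases Nat.eq_zero_or_pos m with rfl | hm1
      · rw [pow_zero, coeff_one, if_neg (by omega), mul_zero]
      · rw [hv.2.2 m (by omega) (by omega), zero_mul]
  have main : ∀ m, Good (PS.iter u m) ∧
      coeff (R := F) r (PS.iter u m) = (m : F) * coeff (R := F) r u := by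
    intro m
    induction m with
    | zero => exact ⟨hXGood, by simp [PS.iter, coeff_X, if_neg (by omega : ¬ r = 1)]⟩
    | succ m ih =>
      have hcomp : PS.iter u (m + 1) = PS.comp u (PS.iter u m) := rfl
      have hG : Good (PS.comp u (PS.iter u m)) := by
        refine ⟨by rw [constantCoeff_comp]; exact h0,
          by rw [coeff_one_comp, h1, ih.1.2.1, one_mul], fun j h2 hjr => ?_⟩
        rw [key u _ huGood ih.1 j h2 (by omega), huGood.2.2 j h2 hjr,
          ih.1.2.2 j h2 hjr, add_zero]
      refine ⟨hcomp ▸ hG, ?_⟩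
      rw [hcomp, key u _ huGood ih.1 r hr2 le_rfl, ih.2]
      push_cast
      ring
  have := (main n).2
  rw [hit, coeff_X, if_neg (by omega : ¬ r = 1)] at this
  have hcu : coeff (R := F) r u = 0 := by
    have hn' : (n : F) ≠ 0 := Nat.cast_ne_zero.2 (by omega)
    have h2 : (n : F) * coeff (R := F) r u = 0 := this.symm
    rcases mul_eq_zero.1 h2 with h | h
    · exact absurd h hn'
    · exact h
  apply hrspec
  rw [hcu, coeff_X, if_neg (by omega)]

/-- averaging: conjugating a finite-order series to its linear part. -/
theorem avg {f : PowerSeries F} (hf0 : constantCoeff (R := F) f = 0) {n : ℕ} (hn : 0 < n)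
    (hit : PS.iter f n = X) {c : F} (hc : coeff (R := F) 1 f = c) (hcn : c ^ n = 1) :
    ∃ h : PowerSeries F, constantCoeff (R := F) h = 0 ∧ coeff (R := F) 1 h = 1 ∧
      PS.comp h f = C (R := F) c * h := by
  have hc0 : c ≠ 0 := by
    intro h; rw [h] at hcn; simp [zero_pow (by omega : n ≠ 0)] at hcn
  set t : ℕ → PowerSeries F := fun i => C (R := F) (c * (n : F)⁻¹ * (c ^ i)⁻¹) * PS.iter f i
    with ht
  set h : PowerSeries F := ∑ j ∈ Finset.range n, C (R := F) ((n : F)⁻¹ * (c ^ j)⁻¹) * PS.iter f j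
    with hh
  have hn' : (n : F) ≠ 0 := Nat.cast_ne_zero.2 (by omega)
  refine ⟨h, ?_, ?_, ?_⟩
  · rw [hh, map_sum]
    apply Finset.sum_eq_zero
    intro j _
    rw [map_mul, constantCoeff_C, constantCoeff_iter hf0, mul_zero]
  · rw [hh, map_sum]
    have : ∀ j ∈ Finset.range n,
        coeff (R := F) 1 (C (R := F) ((n : F)⁻¹ * (c ^ j)⁻¹) * PS.iter f j) = (n : F)⁻¹ := by
      intro j _
      rw [PowerSeries.coeff_C_mul, coeff_one_iter, hc]
      field_simp
    rw [Finset.sum_congr rfl this, Finset.sum_const, Finset.card_range, nsmul_eq_mul]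
    field_simp
  · rw [hh, sum_comp]
    have hstep : ∀ j ∈ Finset.range n,
        PS.comp (C (R := F) ((n : F)⁻¹ * (c ^ j)⁻¹) * PS.iter f j) f = t (j + 1) := by
      intro j _
      rw [C_mul_comp]
      have hf1 : PS.iter f 1 = f := by
        show PS.comp f (PS.iter f 0) = f
        rw [show PS.iter f 0 = (X : PowerSeries F) from rfl, comp_X]
      have hiter : PS.iter f (j + 1) = PS.comp (PS.iter f j) f := by
        rw [iter_add hf0 j 1, hf1]
      have hco : c * (n : F)⁻¹ * (c ^ (j + 1))⁻¹ = (n : F)⁻¹ * (c ^ j)⁻¹ := by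
        rw [pow_succ]
        field_simp
      show _ = C (R := F) (c * (n : F)⁻¹ * (c ^ (j + 1))⁻¹) * PS.iter f (j + 1)
      rw [hco, hiter]
    rw [Finset.sum_congr rfl hstep]
    have hA : ∑ j ∈ Finset.range (n + 1), t j
        = (∑ j ∈ Finset.range n, t (j + 1)) + t 0 := Finset.sum_range_succ' t n
    have hB : ∑ j ∈ Finset.range (n + 1), t j
        = (∑ j ∈ Finset.range n, t j) + t n := Finset.sum_range_succ t n
    have htn : t n = t 0 := by
      simp only [ht, hit, hcn, PS.iter, inv_one, pow_zero, mul_one]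
    have hsum : ∑ j ∈ Finset.range n, t (j + 1) = ∑ j ∈ Finset.range n, t j := by
      have := hA.symm.trans hB
      rw [htn] at this
      exact add_right_cancel this
    rw [hsum, Finset.mul_sum]
    apply Finset.sum_congr rfl
    intro j _
    simp only [ht]
    rw [mul_assoc c, map_mul, mul_assoc]

end PS

theorem stmt_7 (F : Type*) [Field F] [CharZero F] (f g : PowerSeries F)
    (hf : f ∈ PS.G F) (hg : g ∈ PS.G F) (n : ℕ) (hn : 0 < n)
    (hordf : PS.HasOrder f n) (hordg : PS.HasOrder g n) :
    ((∃ h ∈ PS.G F, ∃ hinv ∈ PS.G F,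
        PS.comp h hinv = PowerSeries.X ∧ PS.comp hinv h = PowerSeries.X ∧
        PS.comp (PS.comp h f) hinv = g) ↔
      PowerSeries.coeff (R := F) 1 f = PowerSeries.coeff (R := F) 1 g) ∧
    (PowerSeries.coeff (R := F) 1 f) ^ n = 1 ∧
    (∀ m, 0 < m → m < n → (PowerSeries.coeff (R := F) 1 f) ^ m ≠ 1) := by
  obtain ⟨hf0, hf1⟩ := hf
  obtain ⟨hg0, hg1⟩ := hg
  set cf := coeff (R := F) 1 f with hcf
  set cg := coeff (R := F) 1 g with hcg
  have hcfn : cf ^ n = 1 := by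
    rw [hcf, ← PS.coeff_one_iter, hordf.1, coeff_one_X]
  have hcgn : cg ^ n = 1 := by
    rw [hcg, ← PS.coeff_one_iter, hordg.1, coeff_one_X]
  refine ⟨⟨?_, ?_⟩, hcfn, ?_⟩
  · -- forward: conjugate ⇒ same linear coefficient
    rintro ⟨h, ⟨h0, h1⟩, hinv, ⟨hi0, hi1⟩, hleft, _, hconj⟩
    have e1 : coeff (R := F) 1 h * coeff (R := F) 1 hinv = 1 := by
      rw [← PS.coeff_one_comp, hleft, coeff_one_X]
    have e2 : coeff (R := F) 1 h * cf * coeff (R := F) 1 hinv = cg := by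
      rw [← PS.coeff_one_comp, ← PS.coeff_one_comp, hconj]
    calc cf = coeff (R := F) 1 h * cf * coeff (R := F) 1 hinv := by
          rw [mul_comm (coeff (R := F) 1 h) cf, mul_assoc, e1, mul_one]
      _ = cg := e2
  · -- backward: same linear coefficient ⇒ conjugate
    intro hceq
    obtain ⟨hF, hF0, hF1, hFeq⟩ := PS.avg hf0 hn hordf.1 hcf.symm hcfn
    obtain ⟨hG, hG0, hG1, hGeq⟩ := PS.avg hg0 hn hordg.1 (hcg.symm.trans hceq.symm) hcfn
    obtain ⟨kF, kF0, kF1, hkFhF, hhFkF⟩ :=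
      PS.inv_exists hF0 (hF1 ▸ one_ne_zero)
    obtain ⟨kG, kG0, kG1, hkGhG, hhGkG⟩ :=
      PS.inv_exists hG0 (hG1 ▸ one_ne_zero)
    refine ⟨PS.comp kG hF, ⟨?_, ?_⟩, PS.comp kF hG, ⟨?_, ?_⟩, ?_, ?_, ?_⟩
    · rw [PS.constantCoeff_comp]; exact kG0
    · rw [PS.coeff_one_comp, hF1, mul_one]; exact kG1
    · rw [PS.constantCoeff_comp]; exact kF0
    · rw [PS.coeff_one_comp, hG1, mul_one]; exact kF1
    · -- comp (comp kG hF) (comp kF hG) = X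
      rw [PS.comp_assoc hF0 (by rw [PS.constantCoeff_comp]; exact kF0),
        ← PS.comp_assoc kF0 hG0, hhFkF, PS.X_comp hG0, hkGhG]
    · rw [PS.comp_assoc hG0 (by rw [PS.constantCoeff_comp]; exact kG0),
        ← PS.comp_assoc kG0 hF0, hhGkG, PS.X_comp hF0, hkFhF]
    · -- the conjugation identity
      have hCc0 : constantCoeff (R := F) (C (R := F) cf * hG) = 0 := by
        rw [map_mul, constantCoeff_C, hG0, mul_zero]
      calc PS.comp (PS.comp (PS.comp kG hF) f) (PS.comp kF hG)
          = PS.comp (PS.comp kG (PS.comp hF f)) (PS.comp kF hG) := by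
            rw [PS.comp_assoc hF0 hf0]
        _ = PS.comp (PS.comp kG (C (R := F) cf * hF)) (PS.comp kF hG) := by rw [hFeq]
        _ = PS.comp kG (PS.comp (C (R := F) cf * hF) (PS.comp kF hG)) := by
            rw [PS.comp_assoc (by rw [map_mul, constantCoeff_C, hF0, mul_zero])
              (by rw [PS.constantCoeff_comp]; exact kF0)]
        _ = PS.comp kG (C (R := F) cf * PS.comp hF (PS.comp kF hG)) := by
            rw [PS.C_mul_comp]
        _ = PS.comp kG (C (R := F) cf * PS.comp (PS.comp hF kF) hG) := by
            rw [PS.comp_assoc kF0 hG0]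
        _ = PS.comp kG (C (R := F) cf * hG) := by rw [hhFkF, PS.X_comp hG0]
        _ = PS.comp kG (PS.comp hG g) := by rw [← hGeq]
        _ = PS.comp (PS.comp kG hG) g := by rw [PS.comp_assoc hG0 hg0]
        _ = g := by rw [hkGhG, PS.X_comp hg0]
  · -- primitivity
    intro m hm hmn hcm
    apply hordf.2 m hm hmn
    have hu0 : constantCoeff (R := F) (PS.iter f m) = 0 := PS.constantCoeff_iter hf0 m
    have hu1 : coeff (R := F) 1 (PS.iter f m) = 1 := by
      rw [PS.coeff_one_iter, ← hcf, hcm]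
    have huit : PS.iter (PS.iter f m) n = PowerSeries.X := by
      rw [← PS.iter_mul hf0, show m * n = n * m from Nat.mul_comm m n,
        PS.iter_mul hf0, hordf.1, PS.iter_X]
    exact PS.rigid hu0 hu1 hn huit
end
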